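/- Minimum of cap-area sum for congruent balls: for fixed rho in (1,3) and fixed dimension d >= 3, among all pairs of externally tangent balls X, Y with both caps S_rho(X) ∩ Y and S_rho(Y) ∩ X nonempty, the quantity a(X,Y) + a(Y,X) (sum of fractional cap areas) is minimized when X and Y have equal radii, at which point both caps have angular radius alpha with cos(alpha) = (rho^2+3)/(4*rho). -/

import Mathlib

open intervalIntegral Set

lemma subst_lemma (p a : ℝ) (hp : 0 ≤ p) (ha0 : 0 < a) (ha1 : a ≤ 1) :
    (∫ t in (0:ℝ)..(1 - a ^ 2), t ^ p * (1 - t) ^ (-(1:ℝ)/2)) =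
    ∫ s in a..1, 2 * (1 - s ^ 2) ^ p := by
  have key := intervalIntegral.integral_comp_smul_deriv' (a := a) (b := 1)
    (f := fun s => 1 - s ^ 2) (f' := fun s => -(2 * s))
    (g := fun t => t ^ p * (1 - t) ^ (-(1:ℝ)/2))
    (fun x _ => by simpa using ((hasDerivAt_pow 2 x).const_sub 1))
    (by fun_prop)
    ?cont
  case cont =>
    rintro t ⟨s, hs, rfl⟩
    rw [uIcc_of_le ha1] at hs
    apply ContinuousWithinAt.mul
    · exact (Real.continuousAt_rpow_const _ _ (Or.inr hp)).continuousWithinAt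
    · apply ContinuousAt.continuousWithinAt
      apply ContinuousAt.rpow_const (by fun_prop)
      left
      have h0 : 0 < s := lt_of_lt_of_le ha0 hs.1
      intro h
      simp only at h
      nlinarith
  have congr1 : (∫ x in a..1, (fun s => -(2 * s)) x •
        ((fun t => t ^ p * (1 - t) ^ (-(1:ℝ)/2)) ∘ (fun s => 1 - s ^ 2)) x) =
      ∫ x in a..1, -(2 * (1 - x ^ 2) ^ p) := by
    apply intervalIntegral.integral_congr
    intro s hs
    rw [uIcc_of_le ha1] at hs
    have hs0 : 0 < s := lt_of_lt_of_le ha0 hs.1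
    simp only [Function.comp, smul_eq_mul]
    have h2 : (1 - (1 - s ^ 2)) = s ^ 2 := by ring
    rw [h2]
    have h3 : (s ^ 2 : ℝ) ^ (-(1:ℝ)/2) = s⁻¹ := by
      rw [← Real.rpow_natCast s 2, ← Real.rpow_mul hs0.le]
      norm_num [Real.rpow_neg_one]
    rw [h3]
    field_simp
  rw [congr1] at key
  simp only [intervalIntegral.integral_neg] at key
  norm_num at key
  have e2 : (-(1:ℝ)/2) = -(1/2:ℝ) := by norm_num
  rw [e2, intervalIntegral.integral_symm, ← key, neg_neg,
    intervalIntegral.integral_const_mul]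


open intervalIntegral Set

/-- minimum of the cap-area sum for congruent balls.  For fixed
`ρ ∈ (1,3)` and dimension `d ≥ 3`, with `C = (ρ²+3)/(2ρ)` the constraint on
the cosines of the cap angular radii, the normalized cap-area sum
`g(x) = ∫₀^{1-x²} t^{(d-3)/2}(1-t)^{-1/2} dt + ∫₀^{1-(C-x)²} t^{(d-3)/2}(1-t)^{-1/2} dt`
is minimized on `[C-1, 1]` at `x = C/2`, i.e. when the two balls are congruent;
there `cos α = (ρ²+3)/(4ρ)` for both caps. -/
theorem stmt9 (d : ℕ) (hd : 3 ≤ d) (ρ : ℝ) (hρ1 : 1 < ρ) (hρ3 : ρ < 3)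
    (C : ℝ) (hC : C = (ρ ^ 2 + 3) / (2 * ρ))
    (g : ℝ → ℝ)
    (hg : ∀ x, g x =
      (∫ t in (0:ℝ)..(1 - x ^ 2), t ^ (((d:ℝ) - 3) / 2) * (1 - t) ^ (-(1:ℝ)/2)) +
      (∫ t in (0:ℝ)..(1 - (C - x) ^ 2), t ^ (((d:ℝ) - 3) / 2) * (1 - t) ^ (-(1:ℝ)/2))) :
    (∀ x ∈ Set.Icc (C - 1) 1, g (C / 2) ≤ g x) ∧ C / 2 = (ρ ^ 2 + 3) / (4 * ρ) := by
  have hp : 0 ≤ ((d:ℝ) - 3) / 2 := by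
    have : (3:ℝ) ≤ (d:ℝ) := by exact_mod_cast hd
    linarith
  have hρ0 : 0 < ρ := by linarith
  have hC1 : 1 < C := by
    rw [hC, lt_div_iff₀ (by positivity)]
    nlinarith
  have hC2 : C < 2 := by
    rw [hC, div_lt_iff₀ (by positivity)]
    nlinarith
  set h : ℝ → ℝ := fun s => 2 * (1 - s ^ 2) ^ (((d:ℝ) - 3) / 2) with hh
  have hcont : Continuous h :=
    continuous_const.mul
      ((continuous_const.sub (continuous_pow 2)).rpow_const (fun x => Or.inr hp))
  have hrep : ∀ x ∈ Icc (C - 1) 1, g x = (∫ s in x..1, h s) + ∫ s in (C - x)..1, h s := by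
    intro x hx
    have hx0 : 0 < x := lt_of_lt_of_le (by linarith) hx.1
    have hcx0 : 0 < C - x := by linarith [hx.2]
    have hcx1 : C - x ≤ 1 := by linarith [hx.1]
    rw [hg x, subst_lemma _ x hp hx0 hx.2, subst_lemma _ (C - x) hp hcx0 hcx1]
  have key : ∀ x ∈ Icc (C / 2) 1, g (C / 2) ≤ g x := by
    intro x hx
    have hx1 : x ≤ 1 := hx.2
    have hxc : C / 2 ≤ x := hx.1
    have hmem : x ∈ Icc (C - 1) 1 := ⟨by linarith, hx1⟩
    have hmemc : (C / 2) ∈ Icc (C - 1) 1 := ⟨by linarith, by linarith⟩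
    rw [hrep x hmem, hrep (C / 2) hmemc]
    have e : C - C / 2 = C / 2 := by ring
    rw [e]
    have hint : ∀ a b : ℝ, IntervalIntegrable h MeasureTheory.volume a b :=
      fun a b => hcont.intervalIntegrable a b
    have s1 : (∫ s in (C/2)..1, h s) = (∫ s in (C/2)..x, h s) + ∫ s in x..1, h s :=
      (intervalIntegral.integral_add_adjacent_intervals (hint _ _) (hint _ _)).symm
    have s2 : (∫ s in (C - x)..1, h s) = (∫ s in (C - x)..(C/2), h s) + ∫ s in (C/2)..1, h s :=
      (intervalIntegral.integral_add_adjacent_intervals (hint _ _) (hint _ _)).symm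
    rw [s2, s1]
    have sub : (∫ s in (C - x)..(C/2), h s) = ∫ s in (C/2)..x, h (C - s) := by
      rw [intervalIntegral.integral_comp_sub_left (fun s => h s) C, e]
    have mono : (∫ s in (C/2)..x, h s) ≤ ∫ s in (C/2)..x, h (C - s) := by
      apply intervalIntegral.integral_mono_on hxc (hint _ _)
        ((hcont.comp (continuous_const.sub continuous_id)).intervalIntegrable _ _)
      intro s hs
      have hs1 : C / 2 ≤ s := hs.1
      have hs2 : s ≤ 1 := le_trans hs.2 hx1
      have h1 : 0 ≤ 1 - s ^ 2 := by nlinarith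
      have h2 : 1 - s ^ 2 ≤ 1 - (C - s) ^ 2 := by nlinarith
      exact mul_le_mul_of_nonneg_left (Real.rpow_le_rpow h1 h2 hp) (by norm_num)
    rw [sub]
    linarith
  have gsym : ∀ x : ℝ, g (C - x) = g x := by
    intro x
    rw [hg (C - x), hg x]
    have e : C - (C - x) = x := by ring
    rw [e, add_comm]
  refine ⟨fun x hx => ?_, by rw [hC]; ring⟩
  rcases le_total (C / 2) x with hcase | hcase
  · exact key x ⟨hcase, hx.2⟩
  · rw [← gsym x]
    exact key (C - x) ⟨by linarith, by linarith [hx.1]⟩
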